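/- The Cline-type density f(x) = a e^{−χ(x)} is not subexponential: it is not the case that (∫_0^x f(x−y) f(y) dy)/f(x) → 2 as x → ∞; that is, f ∉ 𝓢₀ (while f ∈ 𝓛₀). -/

import Mathlib

open MeasureTheory Filter Set

noncomputable section

/-- `χ(x) = x^{1/2 + δ·cos(ln(x+1))}` (real power). -/
def chiFn (δ : ℝ) (x : ℝ) : ℝ := x ^ ((1:ℝ)/2 + δ * Real.cos (Real.log (x + 1)))

/-- The normalizing constant `a = (∫₀^∞ e^{-χ(y)} dy)⁻¹`. -/
def clineA (δ : ℝ) : ℝ := (∫ y in Set.Ioi (0:ℝ), Real.exp (-chiFn δ y))⁻¹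

/-- The Cline-type density `f(x) = a e^{-χ(x)}` for `x ≥ 0`, `0` for `x < 0`. -/
def clineF (δ : ℝ) (x : ℝ) : ℝ :=
  if x < 0 then 0 else clineA δ * Real.exp (-chiFn δ x)

/-- The long-tailed density class `𝓛₀`. -/
def LongTailedDensity (f : ℝ → ℝ) : Prop :=
  (∀ᶠ x in atTop, 0 < f x) ∧
  ∀ t : ℝ, Tendsto (fun x => f (x + t) / f x) atTop (nhds 1)

namespace ClineAux

/-! ### Elementary estimates -/

lemma abs_cos_sub_cos (a b : ℝ) : |Real.cos a - Real.cos b| ≤ |a - b| := by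
  rw [Real.cos_sub_cos, abs_mul, abs_mul, abs_neg]
  calc |(2:ℝ)| * |Real.sin ((a+b)/2)| * |Real.sin ((a-b)/2)|
      ≤ 2 * 1 * |(a-b)/2| := by
        apply mul_le_mul _ (Real.abs_sin_le_abs) (abs_nonneg _) (by norm_num)
        apply mul_le_mul (by norm_num) (Real.abs_sin_le_one _) (abs_nonneg _) (by norm_num)
    _ = |a - b| := by rw [abs_div]; norm_num; ring

lemma abs_log_near_one {w : ℝ} (h : |w - 1| ≤ 1/2) : |Real.log w| ≤ 2 * |w - 1| := by
  have hw : (1:ℝ)/2 ≤ w := by linarith [(abs_le.1 h).1]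
  have hw0 : 0 < w := by linarith
  have hub : Real.log w ≤ w - 1 := Real.log_le_sub_one_of_pos hw0
  have hlb : (w - 1) / w ≤ Real.log w := by
    have h1 : Real.log w⁻¹ ≤ w⁻¹ - 1 := Real.log_le_sub_one_of_pos (by positivity)
    rw [Real.log_inv] at h1
    have : 1 - w⁻¹ ≤ Real.log w := by linarith
    calc (w - 1) / w = 1 - w⁻¹ := by field_simp
      _ ≤ Real.log w := this
  rw [abs_le]
  rcases le_total w 1 with hw1 | hw1
  · have habs : |w - 1| = 1 - w := by rw [abs_of_nonpos (by linarith)]; ring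
    rw [habs]
    constructor
    · have hkey : -(2 * (1 - w)) ≤ (w - 1) / w := by
        rw [le_div_iff₀ hw0]
        nlinarith [(by nlinarith : (0:ℝ) ≤ (1 - w) * (2*w - 1))]
      linarith
    · linarith
  · have habs : |w - 1| = w - 1 := abs_of_nonneg (by linarith)
    rw [habs]
    constructor
    · have h2 : 0 ≤ Real.log w := Real.log_nonneg hw1
      nlinarith
    · linarith

/-- `|log(z+ζ) - log z| ≤ 2|ζ|/z` when `2|ζ| ≤ z`. -/
lemma abs_log_add {z ζ : ℝ} (hz : 0 < z) (hzeta : 2 * |ζ| ≤ z) :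
    |Real.log (z + ζ) - Real.log z| ≤ 2 * |ζ| / z := by
  have hzζ : 0 < z + ζ := by
    have := abs_le.1 (le_of_eq rfl : |ζ| ≤ |ζ|)
    have h1 : -|ζ| ≤ ζ := neg_abs_le ζ
    linarith [abs_nonneg ζ]
  have hne : z ≠ 0 := hz.ne'
  have key : Real.log (z + ζ) - Real.log z = Real.log ((z + ζ) / z) := by
    rw [Real.log_div hzζ.ne' hne]
  rw [key]
  have hw : |(z + ζ) / z - 1| = |ζ| / z := by
    rw [show (z + ζ) / z - 1 = ζ / z by field_simp; ring, abs_div, abs_of_pos hz]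
  have h12 : |(z + ζ) / z - 1| ≤ 1/2 := by
    rw [hw, div_le_iff₀ hz]; linarith
  calc |Real.log ((z + ζ) / z)| ≤ 2 * |(z + ζ) / z - 1| := abs_log_near_one h12
    _ = 2 * |ζ| / z := by rw [hw]; ring

/-! ### Basic properties of `chiFn` -/

variable {δ : ℝ}

lemma chi_nonneg {x : ℝ} (hx : 0 ≤ x) : 0 ≤ chiFn δ x := Real.rpow_nonneg hx _

lemma exp_neg_chi_le_one {x : ℝ} (hx : 0 ≤ x) : Real.exp (-chiFn δ x) ≤ 1 :=
  Real.exp_le_one_iff.2 (neg_nonpos.2 (chi_nonneg hx))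

/-- Measurable surrogate for `chiFn` that agrees with it on `[0, ∞)`. -/
def chiAux (δ : ℝ) (x : ℝ) : ℝ :=
  if x = 0 then 0 else Real.exp (Real.log x * ((1:ℝ)/2 + δ * Real.cos (Real.log (x+1))))

lemma chiAux_meas : Measurable (chiAux δ) := by
  unfold chiAux
  apply Measurable.ite (measurableSet_eq_fun measurable_id measurable_const) measurable_const
  apply Real.measurable_exp.comp
  exact Real.measurable_log.mul (measurable_const.add (measurable_const.mul
    (Real.continuous_cos.measurable.comp
      (Real.measurable_log.comp (measurable_id.add_const 1)))))

lemma chi_eq_aux (hδ0 : 0 < δ) (hδ : δ < 1/2) {x : ℝ} (hx : 0 ≤ x) : chiFn δ x = chiAux δ x := by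
  unfold chiFn chiAux
  rcases eq_or_lt_of_le hx with h0 | h0
  · rw [if_pos h0.symm, ← h0]
    apply Real.zero_rpow
    have : Real.cos (Real.log ((0:ℝ) + 1)) = 1 := by norm_num
    rw [this]
    intro hcon
    rcases lt_or_ge δ 0 with h|h <;> nlinarith
  · rw [if_neg h0.ne', Real.rpow_def_of_pos h0]

lemma exponent_le (hδ0 : 0 < δ) (x : ℝ) :
    (1:ℝ)/2 + δ * Real.cos (Real.log (x + 1)) ≤ 1/2 + δ := by
  nlinarith [Real.cos_le_one (Real.log (x + 1))]

lemma exponent_ge (hδ0 : 0 < δ) (x : ℝ) :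
    (1:ℝ)/2 - δ ≤ 1/2 + δ * Real.cos (Real.log (x + 1)) := by
  nlinarith [Real.neg_one_le_cos (Real.log (x + 1))]

lemma chi_le_rpow (hδ0 : 0 < δ) {x : ℝ} (hx : 1 ≤ x) :
    chiFn δ x ≤ x ^ ((1:ℝ)/2 + δ) :=
  Real.rpow_le_rpow_of_exponent_le hx (exponent_le hδ0 x)

lemma rpow_le_chi (hδ0 : 0 < δ) {x : ℝ} (hx : 1 ≤ x) :
    x ^ ((1:ℝ)/2 - δ) ≤ chiFn δ x :=
  Real.rpow_le_rpow_of_exponent_le hx (exponent_ge hδ0 x)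

lemma rpow_le_chi_small (hδ0 : 0 < δ) {x : ℝ} (hx0 : 0 < x) (hx1 : x ≤ 1) :
    x ^ ((1:ℝ)/2 + δ) ≤ chiFn δ x :=
  Real.rpow_le_rpow_of_exponent_ge hx0 hx1 (exponent_le hδ0 x)

/-! ### Integrability and positivity of the normalizing constant -/

lemma integrable_exp_neg_chi (hδ0 : 0 < δ) (hδ : δ < 1/2) :
    IntegrableOn (fun y => Real.exp (-chiFn δ y)) (Ioi (0:ℝ)) := by
  have hmeas : AEStronglyMeasurable (fun y => Real.exp (-chiAux δ y)) (volume : Measure ℝ) :=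
    (Real.measurable_exp.comp chiAux_meas.neg).aestronglyMeasurable
  have heqIoi : EqOn (fun y => Real.exp (-chiAux δ y)) (fun y => Real.exp (-chiFn δ y))
      (Ioi (0:ℝ)) := by
    intro y hy
    simp only [chi_eq_aux hδ0 hδ (le_of_lt hy)]
  have hIoc : IntegrableOn (fun y => Real.exp (-chiAux δ y)) (Ioc (0:ℝ) 1) := by
    apply Measure.integrableOn_of_bounded (M := 1) measure_Ioc_lt_top.ne hmeas
    filter_upwards [ae_restrict_mem measurableSet_Ioc] with y hy
    rw [Real.norm_eq_abs, abs_of_pos (Real.exp_pos _), ← chi_eq_aux hδ0 hδ hy.1.le]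
    exact exp_neg_chi_le_one hy.1.le
  have hIoi : IntegrableOn (fun y => Real.exp (-chiAux δ y)) (Ioi (1:ℝ)) := by
    set c : ℝ := 1/2 - δ with hc
    have hcpos : 0 < c := by rw [hc]; linarith
    set n : ℕ := ⌈2 / c⌉₊ with hn
    have hcn : 2 ≤ c * n := by
      have h1 : 2 / c ≤ (n : ℝ) := Nat.le_ceil _
      calc (2:ℝ) = c * (2 / c) := by field_simp
        _ ≤ c * n := by nlinarith
    have hg : IntegrableOn (fun y : ℝ => (n.factorial : ℝ) * y ^ (-2 : ℝ)) (Ioi (1:ℝ)) :=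
      (integrableOn_Ioi_rpow_of_lt (by norm_num) one_pos).const_mul _
    apply Integrable.mono hg (hmeas.restrict)
    filter_upwards [ae_restrict_mem measurableSet_Ioi] with y hy
    have hy1 : (1:ℝ) ≤ y := le_of_lt hy
    have hy0 : (0:ℝ) < y := lt_of_lt_of_le one_pos hy1
    rw [show chiAux δ y = chiFn δ y from (chi_eq_aux hδ0 hδ hy0.le).symm]
    have key : Real.exp (-chiFn δ y) ≤ (n.factorial : ℝ) * y ^ (-2 : ℝ) := by
      have h1 : y ^ c ≤ chiFn δ y := rpow_le_chi hδ0 hy1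
      have h2 : (y ^ c) ^ n / n.factorial ≤ Real.exp (y ^ c) :=
        Real.pow_div_factorial_le_exp (x := y ^ c) (Real.rpow_nonneg hy0.le _) n
      have h3 : (y ^ c) ^ n = y ^ (c * n) := by
        rw [← Real.rpow_natCast (y ^ c) n, ← Real.rpow_mul hy0.le]
      have h4 : y ^ (2:ℝ) ≤ y ^ (c * n) := Real.rpow_le_rpow_of_exponent_le hy1 hcn
      have h5 : y ^ (2:ℝ) / n.factorial ≤ Real.exp (chiFn δ y) := by
        calc y ^ (2:ℝ) / n.factorial ≤ y ^ (c * n) / n.factorial := by gcongr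
            _ = (y ^ c) ^ n / n.factorial := by rw [h3]
            _ ≤ Real.exp (y ^ c) := h2
            _ ≤ Real.exp (chiFn δ y) := Real.exp_le_exp.2 h1
      have hy2pos : 0 < y ^ (2:ℝ) := Real.rpow_pos_of_pos hy0 _
      have hfac : (0:ℝ) < n.factorial := by exact_mod_cast n.factorial_pos
      rw [Real.exp_neg, show ((-2):ℝ) = -(2:ℝ) by norm_num, Real.rpow_neg hy0.le]
      have heq : (n.factorial : ℝ) * (y ^ (2:ℝ))⁻¹ = (y ^ (2:ℝ) / n.factorial)⁻¹ := by
        field_simp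
      rw [heq]
      exact inv_anti₀ (by positivity) h5
    rw [Real.norm_eq_abs, abs_of_pos (Real.exp_pos _), Real.norm_eq_abs]
    rw [abs_of_nonneg (by positivity : (0:ℝ) ≤ (n.factorial : ℝ) * y ^ (-2 : ℝ))]
    exact key
  have hU : Ioc (0:ℝ) 1 ∪ Ioi 1 = Ioi 0 := Ioc_union_Ioi_eq_Ioi zero_le_one
  have : IntegrableOn (fun y => Real.exp (-chiAux δ y)) (Ioi (0:ℝ)) := by
    rw [← hU]; exact hIoc.union hIoi
  exact this.congr_fun heqIoi measurableSet_Ioi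

lemma integral_exp_neg_chi_pos (hδ0 : 0 < δ) (hδ : δ < 1/2) :
    0 < ∫ y in Ioi (0:ℝ), Real.exp (-chiFn δ y) := by
  rw [setIntegral_pos_iff_support_of_nonneg_ae]
  · have : Function.support (fun y => Real.exp (-chiFn δ y)) = univ := by
      ext y; simp [Function.mem_support, (Real.exp_pos _).ne']
    rw [this, univ_inter, Real.volume_Ioi]
    exact ENNReal.zero_lt_top
  · filter_upwards with y using (Real.exp_pos _).le
  · exact integrable_exp_neg_chi hδ0 hδ

lemma clineA_pos (hδ0 : 0 < δ) (hδ : δ < 1/2) : 0 < clineA δ :=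
  inv_pos.2 (integral_exp_neg_chi_pos hδ0 hδ)

/-! ### Basic properties of `clineF` -/

lemma clineF_of_nonneg {x : ℝ} (hx : 0 ≤ x) :
    clineF δ x = clineA δ * Real.exp (-chiFn δ x) := if_neg (not_lt.2 hx)

lemma clineF_pos (hδ0 : 0 < δ) (hδ : δ < 1/2) {x : ℝ} (hx : 0 ≤ x) : 0 < clineF δ x := by
  rw [clineF_of_nonneg hx]
  exact mul_pos (clineA_pos hδ0 hδ) (Real.exp_pos _)

lemma clineF_nonneg (hδ0 : 0 < δ) (hδ : δ < 1/2) (x : ℝ) : 0 ≤ clineF δ x := by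
  unfold clineF
  split
  · exact le_rfl
  · exact (mul_pos (clineA_pos hδ0 hδ) (Real.exp_pos _)).le

lemma clineF_le (hδ0 : 0 < δ) (hδ : δ < 1/2) (x : ℝ) : clineF δ x ≤ clineA δ := by
  unfold clineF
  split
  · exact (clineA_pos hδ0 hδ).le
  · next hx =>
      calc clineA δ * Real.exp (-chiFn δ x) ≤ clineA δ * 1 :=
          mul_le_mul_of_nonneg_left (exp_neg_chi_le_one (not_lt.1 hx)) (clineA_pos hδ0 hδ).le
        _ = clineA δ := mul_one _

lemma clineF_meas (hδ0 : 0 < δ) (hδ : δ < 1/2) : Measurable (clineF δ) := by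
  have heq : clineF δ = fun x => if x < 0 then 0 else clineA δ * Real.exp (-chiAux δ x) := by
    funext x
    unfold clineF
    split
    · rfl
    · next hx => rw [chi_eq_aux hδ0 hδ (not_lt.1 hx)]
  rw [heq]
  exact Measurable.ite (measurableSet_lt measurable_id measurable_const) measurable_const
    (measurable_const.mul (Real.measurable_exp.comp chiAux_meas.neg))

/-! ### The long-tailed property -/

lemma tendsto_one_add_log_mul_rpow (c : ℝ) (hc : 0 ≤ c) {r : ℝ} (hr : r < 0) :
    Tendsto (fun x : ℝ => (1 + Real.log (x + c)) * x ^ r) atTop (nhds 0) := by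
  set ε : ℝ := -r/2 with hε
  have hεpos : 0 < ε := by rw [hε]; linarith
  have hlim : Tendsto (fun x : ℝ => (1 + 2 ^ ε / ε) * x ^ (r/2)) atTop (nhds 0) := by
    have h0 : Tendsto (fun x : ℝ => x ^ (-(-(r/2)))) atTop (nhds 0) :=
      tendsto_rpow_neg_atTop (by linarith)
    have h1 : Tendsto (fun x : ℝ => x ^ (r/2)) atTop (nhds 0) := by
      simpa using h0
    simpa using h1.const_mul (1 + 2 ^ ε / ε)
  apply squeeze_zero' ?_ ?_ hlim
  · filter_upwards [eventually_ge_atTop (max 1 c)] with x hx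
    have hx1 : (1:ℝ) ≤ x := le_trans (le_max_left _ _) hx
    have hxc : (1:ℝ) ≤ x + c := by linarith
    have hlog : 0 ≤ Real.log (x + c) := Real.log_nonneg hxc
    have : (0:ℝ) < x := lt_of_lt_of_le one_pos hx1
    positivity
  · filter_upwards [eventually_ge_atTop (max 1 c)] with x hx
    have hx1 : (1:ℝ) ≤ x := le_trans (le_max_left _ _) hx
    have hxc : c ≤ x := le_trans (le_max_right _ _) hx
    have hx0 : (0:ℝ) < x := lt_of_lt_of_le one_pos hx1
    have h1 : Real.log (x + c) ≤ (x + c) ^ ε / ε :=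
      Real.log_le_rpow_div (by linarith) hεpos
    have h2 : (x + c) ^ ε ≤ (2 * x) ^ ε :=
      Real.rpow_le_rpow (by linarith) (by linarith) hεpos.le
    have h3 : (2 * x) ^ ε = 2 ^ ε * x ^ ε := Real.mul_rpow (by norm_num) hx0.le
    have h4 : (1:ℝ) ≤ x ^ ε := Real.one_le_rpow hx1 hεpos.le
    have h5 : 1 + Real.log (x + c) ≤ (1 + 2 ^ ε / ε) * x ^ ε := by
      have h6 : Real.log (x + c) ≤ 2 ^ ε / ε * x ^ ε := by
        calc Real.log (x + c) ≤ (x + c) ^ ε / ε := h1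
          _ ≤ (2 ^ ε * x ^ ε) / ε := by rw [← h3]; gcongr
          _ = 2 ^ ε / ε * x ^ ε := by ring
      nlinarith
    have hrx : (0:ℝ) < x ^ r := Real.rpow_pos_of_pos hx0 _
    calc (1 + Real.log (x + c)) * x ^ r ≤ ((1 + 2 ^ ε / ε) * x ^ ε) * x ^ r := by
          apply mul_le_mul_of_nonneg_right h5 hrx.le
      _ = (1 + 2 ^ ε / ε) * (x ^ ε * x ^ r) := by ring
      _ = (1 + 2 ^ ε / ε) * x ^ (r/2) := by
          rw [← Real.rpow_add hx0]
          congr 1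
          rw [hε]; ring_nf

lemma chi_diff_tendsto (hδ0 : 0 < δ) (hδ : δ < 1/2) (t : ℝ) :
    Tendsto (fun x => chiFn δ (x + t) - chiFn δ x) atTop (nhds 0) := by
  set p : ℝ → ℝ := fun z => (1:ℝ)/2 + δ * Real.cos (Real.log (z+1)) with hp
  set A : ℝ → ℝ := fun x => 4 * |t| * ((1 + Real.log (x + |t|)) * x ^ (-1:ℝ)) with hA
  have hAlim : Tendsto A atTop (nhds 0) := by
    have := (tendsto_one_add_log_mul_rpow |t| (abs_nonneg t) (r := -1)
      (by norm_num)).const_mul (4*|t|)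
    simpa [hA] using this
  have hA1 : ∀ᶠ x in atTop, A x < 1 := hAlim.eventually (eventually_lt_nhds one_pos)
  have hD : Tendsto (fun x => x ^ ((1:ℝ)/2 + δ) * (2 * A x)) atTop (nhds 0) := by
    have h2 : Tendsto (fun x : ℝ =>
        8 * |t| * ((1 + Real.log (x + |t|)) * x ^ ((1:ℝ)/2 + δ - 1))) atTop (nhds 0) := by
      have := (tendsto_one_add_log_mul_rpow |t| (abs_nonneg t) (r := (1:ℝ)/2 + δ - 1)
        (by linarith)).const_mul (8*|t|)
      simpa using this
    apply h2.congr'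
    filter_upwards [eventually_gt_atTop (0:ℝ)] with x hx
    have : x ^ ((1:ℝ)/2 + δ - 1) = x ^ ((1:ℝ)/2 + δ) * x ^ (-1:ℝ) := by
      rw [← Real.rpow_add hx]; ring_nf
    rw [hA]
    simp only []
    rw [this]
    ring
  apply squeeze_zero_norm' ?_ hD
  filter_upwards [eventually_ge_atTop (2*|t| + 2), hA1] with x hx hAx
  have habs : |t| ≤ x := by linarith [abs_nonneg t]
  have hx1 : (1:ℝ) ≤ x := by linarith [abs_nonneg t]
  have hx0 : (0:ℝ) < x := lt_of_lt_of_le one_pos hx1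
  have hu1 : (1:ℝ) ≤ x + t := by
    have := neg_abs_le t; linarith
  have hu0 : (0:ℝ) < x + t := lt_of_lt_of_le one_pos hu1
  have hA0 : 0 ≤ A x := by
    rw [hA]
    have : 0 ≤ Real.log (x + |t|) := Real.log_nonneg (by linarith [abs_nonneg t])
    have := Real.rpow_pos_of_pos hx0 (-1:ℝ)
    positivity
  -- the increment of the exponent
  set Δ : ℝ := Real.log (x+t) * p (x+t) - Real.log x * p x with hΔdef
  have hpu_abs : |p (x+t)| ≤ 1 := by
    rw [hp, abs_le]
    constructor <;> nlinarith [Real.neg_one_le_cos (Real.log (x+t+1)),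
      Real.cos_le_one (Real.log (x+t+1))]
  have h1 : |Real.log (x+t) - Real.log x| ≤ 2 * |t| / x :=
    abs_log_add hx0 (by linarith)
  have h2 : |p (x+t) - p x| ≤ δ * (2 * |t| / (x+1)) := by
    have hcos : |Real.cos (Real.log ((x+1)+t)) - Real.cos (Real.log (x+1))|
        ≤ |Real.log ((x+1)+t) - Real.log (x+1)| := abs_cos_sub_cos _ _
    have hlog2 : |Real.log ((x+1)+t) - Real.log (x+1)| ≤ 2 * |t| / (x+1) :=
      abs_log_add (by linarith) (by linarith)
    have hpdiff : p (x+t) - p x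
        = δ * (Real.cos (Real.log ((x+1)+t)) - Real.cos (Real.log (x+1))) := by
      rw [hp]
      simp only []
      rw [show x + t + 1 = (x+1)+t by ring]
      ring
    rw [hpdiff, abs_mul, abs_of_pos hδ0]
    exact mul_le_mul_of_nonneg_left (le_trans hcos hlog2) hδ0.le
  have hlogx0 : 0 ≤ Real.log x := Real.log_nonneg hx1
  have hlogxle : Real.log x ≤ Real.log (x + |t|) :=
    Real.log_le_log hx0 (by linarith [abs_nonneg t])
  have hlogxt0 : 0 ≤ Real.log (x + |t|) := Real.log_nonneg (by linarith [abs_nonneg t])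
  have hΔ : |Δ| ≤ A x / 2 := by
    have hsplit : Δ = (Real.log (x+t) - Real.log x) * p (x+t)
        + Real.log x * (p (x+t) - p x) := by rw [hΔdef]; ring
    have hstep : |Δ| ≤ |Real.log (x+t) - Real.log x| * |p (x+t)|
        + Real.log x * |p (x+t) - p x| := by
      rw [hsplit]
      calc |(Real.log (x+t) - Real.log x) * p (x+t) + Real.log x * (p (x+t) - p x)|
          ≤ |(Real.log (x+t) - Real.log x) * p (x+t)| + |Real.log x * (p (x+t) - p x)| :=
            abs_add_le _ _
        _ = |Real.log (x+t) - Real.log x| * |p (x+t)| + Real.log x * |p (x+t) - p x| := by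
            rw [abs_mul, abs_mul, abs_of_nonneg hlogx0]
    have hb1 : |Real.log (x+t) - Real.log x| * |p (x+t)| ≤ 2 * |t| / x := by
      calc |Real.log (x+t) - Real.log x| * |p (x+t)|
          ≤ (2 * |t| / x) * 1 := mul_le_mul h1 hpu_abs (abs_nonneg _) (by positivity)
        _ = 2 * |t| / x := mul_one _
    have hb2 : Real.log x * |p (x+t) - p x| ≤ Real.log (x + |t|) * (2 * |t| / x) := by
      have hd : δ * (2 * |t| / (x+1)) ≤ 2 * |t| / x := by
        have hinv : 2 * |t| / (x+1) ≤ 2 * |t| / x := by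
          apply div_le_div_of_nonneg_left (by positivity) hx0 (by linarith)
        nlinarith [abs_nonneg t, div_nonneg (by positivity : (0:ℝ) ≤ 2 * |t|) hx0.le]
      calc Real.log x * |p (x+t) - p x| ≤ Real.log (x + |t|) * (δ * (2 * |t| / (x+1))) :=
            mul_le_mul hlogxle h2 (abs_nonneg _) hlogxt0
        _ ≤ Real.log (x + |t|) * (2 * |t| / x) :=
            mul_le_mul_of_nonneg_left hd hlogxt0
    have hXA : 2 * |t| / x + Real.log (x + |t|) * (2 * |t| / x) = A x / 2 := by
      rw [hA]
      simp only []
      rw [Real.rpow_neg_one]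
      field_simp
      ring
    linarith [hstep, hb1, hb2]
  have hΔ1 : |Δ| ≤ 1 := by linarith
  -- rewrite the difference of chi values
  have hchix : chiFn δ x = Real.exp (Real.log x * p x) := Real.rpow_def_of_pos hx0 _
  have hchiu : chiFn δ (x+t) = Real.exp (Real.log (x+t) * p (x+t)) :=
    Real.rpow_def_of_pos hu0 _
  have hkey : chiFn δ (x+t) - chiFn δ x
      = Real.exp (Real.log x * p x) * (Real.exp Δ - 1) := by
    rw [hchix, hchiu, mul_sub, mul_one, ← Real.exp_add]
    congr 2
    rw [hΔdef]; ring
  rw [Real.norm_eq_abs, hkey, abs_mul, abs_of_pos (Real.exp_pos _)]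
  have hexp1 : |Real.exp Δ - 1| ≤ 2 * |Δ| := Real.abs_exp_sub_one_le hΔ1
  have hchile : Real.exp (Real.log x * p x) ≤ x ^ ((1:ℝ)/2 + δ) := by
    rw [← hchix]; exact chi_le_rpow hδ0 hx1
  calc Real.exp (Real.log x * p x) * |Real.exp Δ - 1|
      ≤ x ^ ((1:ℝ)/2 + δ) * (2 * |Δ|) := by
        apply mul_le_mul hchile hexp1 (abs_nonneg _)
          (Real.rpow_nonneg hx0.le _)
    _ ≤ x ^ ((1:ℝ)/2 + δ) * (2 * A x) := by
        have : 2 * |Δ| ≤ 2 * A x := by linarith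
        exact mul_le_mul_of_nonneg_left this (Real.rpow_nonneg hx0.le _)

lemma ratio_tendsto (hδ0 : 0 < δ) (hδ : δ < 1/2) (t : ℝ) :
    Tendsto (fun x => clineF δ (x + t) / clineF δ x) atTop (nhds 1) := by
  have hχ : Tendsto (fun x => chiFn δ x - chiFn δ (x + t)) atTop (nhds 0) := by
    have h := (chi_diff_tendsto hδ0 hδ t).neg
    rw [neg_zero] at h
    apply h.congr
    intro x; ring
  have hexp : Tendsto (fun x => Real.exp (chiFn δ x - chiFn δ (x + t))) atTop (nhds 1) := by
    have := (Real.continuous_exp.tendsto 0).comp hχ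
    simpa [Function.comp_def] using this
  apply hexp.congr'
  filter_upwards [eventually_ge_atTop (max 0 (-t))] with x hx
  have hx0 : 0 ≤ x := le_trans (le_max_left _ _) hx
  have hxt : 0 ≤ x + t := by
    have := le_trans (le_max_right _ _) hx; linarith
  rw [clineF_of_nonneg hxt, clineF_of_nonneg hx0,
    mul_div_mul_left _ _ (clineA_pos hδ0 hδ).ne', ← Real.exp_sub]
  congr 1
  ring

/-! ### The non-subexponential part -/

lemma exp_fifth : Real.exp ((1:ℝ)/5) ≤ 14/11 := by
  have h5 : Real.exp ((1:ℝ)/5) ^ (5:ℕ) = Real.exp 1 := by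
    rw [← Real.exp_nat_mul]; norm_num
  have hle : Real.exp ((1:ℝ)/5) ^ (5:ℕ) ≤ (14/11:ℝ) ^ (5:ℕ) := by
    rw [h5]
    calc Real.exp 1 ≤ 2.7182818286 := Real.exp_one_lt_d9.le
      _ ≤ (14/11:ℝ)^(5:ℕ) := by norm_num
  exact le_of_pow_le_pow_left₀ (by norm_num) (by norm_num) hle

lemma log_four_le_pi : Real.log 4 ≤ Real.pi := by
  rw [Real.log_le_iff_le_exp (by norm_num)]
  calc (4:ℝ) ≤ Real.pi + 1 := by nlinarith [Real.pi_gt_three]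
    _ ≤ Real.exp Real.pi := Real.add_one_le_exp Real.pi

lemma cos_fifth_le : Real.cos ((1:ℝ)/5) ≤ 1 - 1/200 := by
  have habs : |(1:ℝ)/5| ≤ Real.pi := by
    rw [abs_of_pos (by norm_num : (0:ℝ) < 1/5)]
    nlinarith [Real.pi_gt_three]
  have h := Real.cos_le_one_sub_mul_cos_sq habs
  have hπ : Real.pi ≤ 4 := Real.pi_le_four
  have hπ0 : 0 < Real.pi := Real.pi_pos
  have h2 : 2 / Real.pi ^ 2 * ((1:ℝ)/5) ^ 2 ≥ 1/200 := by
    rw [ge_iff_le, div_mul_eq_mul_div, le_div_iff₀ (by positivity)]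
    nlinarith
  linarith

lemma seven_le_exp_n (n : ℕ) (hn : 1 ≤ n) : 7 ≤ Real.exp (n * (2*Real.pi)) := by
  have hn' : (1:ℝ) ≤ (n:ℝ) := by exact_mod_cast hn
  have h1 : (6:ℝ) ≤ n * (2*Real.pi) := by nlinarith [Real.pi_gt_three]
  calc (7:ℝ) ≤ n * (2*Real.pi) + 1 := by linarith
    _ ≤ Real.exp (n * (2*Real.pi)) := Real.add_one_le_exp _

lemma cos_log_bound {x y : ℝ} (n : ℕ) (hn : 1 ≤ n)
    (hx : x + 1 = Real.exp (n * (2*Real.pi)))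
    (hy1 : x/4 ≤ y) (hy2 : y ≤ 3*x/4) :
    Real.cos (Real.log (y+1)) ≤ Real.cos ((1:ℝ)/5) := by
  have hx7 : 7 ≤ x + 1 := by rw [hx]; exact seven_le_exp_n n hn
  have hx6 : 6 ≤ x := by linarith
  have hy0 : 0 < y + 1 := by linarith
  set θ := Real.log (y+1) with hθ
  have hθub : θ ≤ n*(2*Real.pi) - 1/5 := by
    have h1 : y + 1 ≤ (x+1) * (11/14) := by nlinarith
    have h2 : θ ≤ Real.log ((x+1)*(11/14)) := Real.log_le_log hy0 h1
    rw [Real.log_mul (by positivity) (by norm_num), hx, Real.log_exp] at h2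
    have h3 : Real.log (11/14:ℝ) ≤ -(1/5) := by
      rw [show (11/14:ℝ) = ((14/11:ℝ))⁻¹ by norm_num, Real.log_inv, neg_le_neg_iff]
      rw [Real.le_log_iff_exp_le (by norm_num)]
      exact exp_fifth
    linarith
  have hθlb : n*(2*Real.pi) - Real.log 4 ≤ θ := by
    have h1 : (x+1)/4 ≤ y + 1 := by linarith
    have h2 : Real.log ((x+1)/4) ≤ θ := Real.log_le_log (by positivity) h1
    rw [Real.log_div (by positivity) (by norm_num), hx, Real.log_exp] at h2
    linarith
  have hθu : θ = n*(2*Real.pi) - (n*(2*Real.pi) - θ) := by ring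
  rw [hθu, Real.cos_nat_mul_two_pi_sub]
  apply Real.cos_le_cos_of_nonneg_of_le_pi (by norm_num : (0:ℝ) ≤ 1/5)
  · calc n*(2*Real.pi) - θ ≤ Real.log 4 := by linarith
      _ ≤ Real.pi := log_four_le_pi
  · linarith

lemma chi_upper_mid (hδ0 : 0 < δ) (hδ : δ < 1/2) {x y : ℝ} (hy1 : 1 ≤ y) (hyx : y ≤ x)
    (hcos : Real.cos (Real.log (y+1)) ≤ Real.cos ((1:ℝ)/5)) :
    chiFn δ y ≤ x ^ ((1:ℝ)/2 + δ * Real.cos ((1:ℝ)/5)) := by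
  calc chiFn δ y ≤ y ^ ((1:ℝ)/2 + δ * Real.cos ((1:ℝ)/5)) :=
      Real.rpow_le_rpow_of_exponent_le hy1 (by nlinarith)
    _ ≤ x ^ ((1:ℝ)/2 + δ * Real.cos ((1:ℝ)/5)) :=
      Real.rpow_le_rpow (by linarith) hyx (by nlinarith [Real.neg_one_le_cos ((1:ℝ)/5)])

lemma conv_lower (hδ0 : 0 < δ) (hδ : δ < 1/2) (n : ℕ) (hn : 1 ≤ n) {x : ℝ}
    (hx : x + 1 = Real.exp (n * (2*Real.pi))) :
    x/4 * clineA δ * Real.exp (x ^ ((1:ℝ)/2 + δ)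
        - 2 * x ^ ((1:ℝ)/2 + δ * Real.cos ((1:ℝ)/5)))
      ≤ (∫ y in (0:ℝ)..x, clineF δ (x - y) * clineF δ y) / clineF δ x := by
  set a := clineA δ with ha
  have hapos : 0 < a := clineA_pos hδ0 hδ
  set α : ℝ := (1:ℝ)/2 + δ with hα
  set β : ℝ := (1:ℝ)/2 + δ * Real.cos ((1:ℝ)/5) with hβ
  have hx7 : 7 ≤ x + 1 := by rw [hx]; exact seven_le_exp_n n hn
  have hx6 : 6 ≤ x := by linarith
  have hx0 : (0:ℝ) < x := by linarith
  -- chi at x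
  have hchix : chiFn δ x = x ^ α := by
    unfold chiFn
    rw [hx, Real.log_exp, Real.cos_nat_mul_two_pi]
    rw [hα, mul_one]
  set g : ℝ → ℝ := fun y => clineF δ (x - y) * clineF δ y with hg
  have hgmeas : Measurable g :=
    ((clineF_meas hδ0 hδ).comp (measurable_const.sub measurable_id)).mul (clineF_meas hδ0 hδ)
  have hgnonneg : ∀ y, 0 ≤ g y := fun y =>
    mul_nonneg (clineF_nonneg hδ0 hδ _) (clineF_nonneg hδ0 hδ _)
  have hgbdd : ∀ y, g y ≤ a^2 := by
    intro y
    rw [hg]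
    calc clineF δ (x - y) * clineF δ y ≤ a * a :=
        mul_le_mul (clineF_le hδ0 hδ _) (clineF_le hδ0 hδ _) (clineF_nonneg hδ0 hδ _) hapos.le
      _ = a^2 := by ring
  have hIoc : ∀ u v : ℝ, IntegrableOn g (Ioc u v) := by
    intro u v
    apply Measure.integrableOn_of_bounded (M := a^2) measure_Ioc_lt_top.ne
      hgmeas.aestronglyMeasurable
    filter_upwards with y
    rw [Real.norm_eq_abs, abs_of_nonneg (hgnonneg y)]
    exact hgbdd y
  have hint : IntervalIntegrable g volume 0 x := ⟨hIoc 0 x, hIoc x 0⟩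
  have hint2 : IntervalIntegrable g volume (x/4) (x/2) := ⟨hIoc _ _, hIoc _ _⟩
  set m : ℝ := a^2 * Real.exp (-(2 * x ^ β)) with hm
  have hpoint : ∀ y ∈ Icc (x/4) (x/2), (fun _ => m) y ≤ g y := by
    intro y hy
    obtain ⟨hya, hyb⟩ := hy
    have hy34 : y ≤ 3*x/4 := by linarith
    have hy1 : (1:ℝ) ≤ y := by linarith
    have hxy4 : x/4 ≤ x - y := by linarith
    have hxy34 : x - y ≤ 3*x/4 := by linarith
    have hxy1 : (1:ℝ) ≤ x - y := by linarith
    have hχy : chiFn δ y ≤ x ^ β :=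
      chi_upper_mid hδ0 hδ hy1 (by linarith) (cos_log_bound n hn hx hya hy34)
    have hχxy : chiFn δ (x - y) ≤ x ^ β :=
      chi_upper_mid hδ0 hδ hxy1 (by linarith) (cos_log_bound n hn hx hxy4 hxy34)
    have hfy : a * Real.exp (-(x ^ β)) ≤ clineF δ y := by
      rw [clineF_of_nonneg (by linarith : (0:ℝ) ≤ y)]
      exact mul_le_mul_of_nonneg_left (Real.exp_le_exp.2 (by linarith)) hapos.le
    have hfxy : a * Real.exp (-(x ^ β)) ≤ clineF δ (x - y) := by
      rw [clineF_of_nonneg (by linarith : (0:ℝ) ≤ x - y)]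
      exact mul_le_mul_of_nonneg_left (Real.exp_le_exp.2 (by linarith)) hapos.le
    have hmsplit : m = (a * Real.exp (-(x ^ β))) * (a * Real.exp (-(x ^ β))) := by
      rw [hm, show (a * Real.exp (-(x ^ β))) * (a * Real.exp (-(x ^ β)))
        = a^2 * (Real.exp (-(x ^ β)) * Real.exp (-(x ^ β))) by ring, ← Real.exp_add]
      congr 2
      ring
    show m ≤ g y
    rw [hmsplit, hg]
    exact mul_le_mul hfxy hfy (by positivity) (clineF_nonneg hδ0 hδ _)
  have hIbound : x/4 * m ≤ ∫ y in (0:ℝ)..x, g y := by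
    have s1 : ∫ _y in (x/4:ℝ)..(x/2), m ≤ ∫ y in (x/4:ℝ)..(x/2), g y :=
      intervalIntegral.integral_mono_on (by linarith) intervalIntegrable_const hint2 hpoint
    have s2 : ∫ y in (x/4:ℝ)..(x/2), g y ≤ ∫ y in (0:ℝ)..x, g y :=
      intervalIntegral.integral_mono_interval (by linarith) (by linarith) (by linarith)
        (Eventually.of_forall hgnonneg) hint
    have s3 : ∫ _y in (x/4:ℝ)..(x/2), m = (x/2 - x/4) * m := by
      rw [intervalIntegral.integral_const, smul_eq_mul]
    have s4 : x/2 - x/4 = x/4 := by ring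
    rw [s3, s4] at s1
    linarith
  have hfx : clineF δ x = a * Real.exp (-(x ^ α)) := by
    rw [clineF_of_nonneg hx0.le, hchix]
  have hfxpos : 0 < clineF δ x := clineF_pos hδ0 hδ hx0.le
  have heq : x/4 * a * Real.exp (x ^ α - 2 * x ^ β) = (x/4 * m) / clineF δ x := by
    rw [hfx, eq_div_iff (by positivity : (a * Real.exp (-(x ^ α))) ≠ 0)]
    rw [show x/4 * a * Real.exp (x ^ α - 2 * x ^ β) * (a * Real.exp (-(x ^ α)))
      = x/4 * a^2 * (Real.exp (x ^ α - 2 * x ^ β) * Real.exp (-(x ^ α))) by ring,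
      ← Real.exp_add, show x ^ α - 2 * x ^ β + -(x ^ α) = -(2 * x ^ β) by ring, hm]
    ring
  rw [heq]
  gcongr

end ClineAux

open ClineAux in
theorem cline_density_not_subexponential (δ : ℝ) (hδ0 : 0 < δ) (hδ : δ < 1/2) :
    LongTailedDensity (clineF δ) ∧
    ¬ Tendsto (fun x =>
        (∫ y in (0:ℝ)..x, clineF δ (x - y) * clineF δ y) / clineF δ x)
      atTop (nhds 2) := by
  constructor
  · constructor
    · filter_upwards [eventually_ge_atTop (0:ℝ)] with x hx
      exact clineF_pos hδ0 hδ hx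
    · exact fun t => ratio_tendsto hδ0 hδ t
  · intro hcon
    set α : ℝ := (1:ℝ)/2 + δ with hα
    set β : ℝ := (1:ℝ)/2 + δ * Real.cos ((1:ℝ)/5) with hβ
    set s : ℕ → ℝ := fun n => Real.exp (n * (2*Real.pi)) - 1 with hs
    have hstend : Tendsto s atTop atTop := by
      apply tendsto_atTop_add_const_right
      exact Real.tendsto_exp_atTop.comp
        (tendsto_natCast_atTop_atTop.atTop_mul_const (by positivity))
    set R : ℝ → ℝ := fun x =>
      (∫ y in (0:ℝ)..x, clineF δ (x - y) * clineF δ y) / clineF δ x with hR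
    have hcomp : Tendsto (fun n => R (s n)) atTop (nhds 2) := hcon.comp hstend
    set G : ℝ → ℝ := fun x => x/4 * clineA δ * Real.exp (x ^ α - 2 * x ^ β) with hG
    have hαβ : 0 < α - β := by
      have := cos_fifth_le
      rw [hα, hβ]
      nlinarith
    have hGtop : Tendsto G atTop atTop := by
      apply tendsto_atTop_mono' atTop ?_
        (tendsto_id.atTop_mul_const (show (0:ℝ) < clineA δ / 4 by
          have := clineA_pos hδ0 hδ; positivity))
      filter_upwards [eventually_ge_atTop (1:ℝ),
        (tendsto_rpow_atTop hαβ).eventually_ge_atTop 2] with x hx1 hx2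
      have hx0 : (0:ℝ) < x := lt_of_lt_of_le one_pos hx1
      have hβ0 : (0:ℝ) ≤ x ^ β := Real.rpow_nonneg hx0.le _
      have hsplit : x ^ α = x ^ (α - β) * x ^ β := by
        rw [← Real.rpow_add hx0]; congr 1; ring
      have hxe : 0 ≤ x ^ α - 2 * x ^ β := by
        rw [hsplit]; nlinarith
      have hexp1 : (1:ℝ) ≤ Real.exp (x ^ α - 2 * x ^ β) := Real.one_le_exp hxe
      calc id x * (clineA δ / 4) = x/4 * clineA δ * 1 := by simp [id]; ring
        _ ≤ x/4 * clineA δ * Real.exp (x ^ α - 2 * x ^ β) := by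
            apply mul_le_mul_of_nonneg_left hexp1
            have := clineA_pos hδ0 hδ; positivity
    have hlower : ∀ᶠ n in atTop, G (s n) ≤ R (s n) := by
      filter_upwards [eventually_ge_atTop 1] with n hn
      have hxeq : s n + 1 = Real.exp (n * (2*Real.pi)) := by rw [hs]; ring
      exact conv_lower hδ0 hδ n hn hxeq
    have hRtop : Tendsto (fun n => R (s n)) atTop atTop :=
      tendsto_atTop_mono' atTop hlower (hGtop.comp hstend)
    exact not_tendsto_nhds_of_tendsto_atTop hRtop 2 hcomp
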